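/- (Lower bound on the Ornstein–Uhlenbeck mean first passage time.) For every μ > 0 and every threshold η > 0, the quantity T̄(η) = (2/μ)·(√π·φ(η√(μ/2)) + ψ(η√(μ/2))) satisfies T̄(η) ≥ (2/μ)·( √π·(e^{η²μ/2} − 1)/(√2·η·√μ) + (e^{η²μ/2} − 1)/(2η²μ) − 1/2 ). -/

import Mathlib

open Real intervalIntegral

lemma hderiv1 (τ : ℝ) : HasDerivAt (fun t : ℝ => Real.exp (t ^ 2) / 2) (τ * Real.exp (τ ^ 2)) τ := by
  have h : HasDerivAt (fun t : ℝ => t ^ 2) (2 * τ) τ := by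
    simpa using (hasDerivAt_pow 2 τ)
  have := (h.exp).div_const 2
  refine this.congr_deriv ?_
  ring

lemma int_texp (z : ℝ) : ∫ τ in (0:ℝ)..z, τ * Real.exp (τ ^ 2) = (Real.exp (z ^ 2) - 1) / 2 := by
  have h := intervalIntegral.integral_eq_sub_of_hasDerivAt (f := fun t : ℝ => Real.exp (t ^ 2) / 2)
    (f' := fun t : ℝ => t * Real.exp (t ^ 2)) (a := 0) (b := z)
    (fun τ _ => hderiv1 τ)
    (by apply Continuous.intervalIntegrable; continuity)
  simp at h
  rw [h]; ring

lemma hderiv2 (τ : ℝ) : HasDerivAt (fun t : ℝ => -(Real.exp (-t ^ 2) / 2)) (τ * Real.exp (-τ ^ 2)) τ := by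
  have h : HasDerivAt (fun t : ℝ => -t ^ 2) (-(2 * τ)) τ := by
    simpa using (hasDerivAt_pow 2 τ).fun_neg
  have := ((h.exp).div_const 2).neg
  refine this.congr_deriv ?_
  ring

lemma int_texpneg (z : ℝ) : ∫ s in (0:ℝ)..z, s * Real.exp (-s ^ 2) = (1 - Real.exp (-z ^ 2)) / 2 := by
  have h := intervalIntegral.integral_eq_sub_of_hasDerivAt (f := fun t : ℝ => -(Real.exp (-t ^ 2) / 2))
    (f' := fun t : ℝ => t * Real.exp (-t ^ 2)) (a := 0) (b := z)
    (fun τ _ => hderiv2 τ)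
    (by apply Continuous.intervalIntegrable; continuity)
  simp at h
  rw [h]; ring

lemma phi_lb (z : ℝ) (hz : 0 < z) :
    (Real.exp (z ^ 2) - 1) / (2 * z) ≤ ∫ τ in (0:ℝ)..z, Real.exp (τ ^ 2) := by
  have h1 : ∫ τ in (0:ℝ)..z, τ * Real.exp (τ ^ 2) ≤ ∫ τ in (0:ℝ)..z, z * Real.exp (τ ^ 2) := by
    apply intervalIntegral.integral_mono_on hz.le
    · apply Continuous.intervalIntegrable; continuity
    · apply Continuous.intervalIntegrable; continuity
    · intro x hx
      exact mul_le_mul_of_nonneg_right hx.2 (Real.exp_nonneg _)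
  rw [int_texp, intervalIntegral.integral_const_mul] at h1
  rw [div_le_iff₀ (by positivity)]
  linarith [h1]

lemma inner_lb (τ : ℝ) (hτ : 0 ≤ τ) :
    (1 - Real.exp (-τ ^ 2)) / 2 ≤ τ * ∫ s in (0:ℝ)..τ, Real.exp (-s ^ 2) := by
  have h1 : ∫ s in (0:ℝ)..τ, s * Real.exp (-s ^ 2) ≤ ∫ s in (0:ℝ)..τ, τ * Real.exp (-s ^ 2) := by
    apply intervalIntegral.integral_mono_on hτ
    · apply Continuous.intervalIntegrable; continuity
    · apply Continuous.intervalIntegrable; continuity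
    · intro x hx
      exact mul_le_mul_of_nonneg_right hx.2 (Real.exp_nonneg _)
  rw [int_texpneg, intervalIntegral.integral_const_mul] at h1
  exact h1

lemma inner_cont : Continuous fun τ : ℝ => Real.exp (τ ^ 2) * ∫ s in (0:ℝ)..τ, Real.exp (-s ^ 2) := by
  apply Continuous.mul (by continuity)
  exact intervalIntegral.continuous_primitive
    (fun a b => (by continuity : Continuous fun s : ℝ => Real.exp (-s ^ 2)).intervalIntegrable a b) 0

lemma pointwise_psi (z τ : ℝ) (hz : 0 < z) (h0 : 0 ≤ τ) (h1 : τ ≤ z) :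
    τ * (Real.exp (τ ^ 2) - 1) / (2 * z ^ 2)
      ≤ Real.exp (τ ^ 2) * ∫ s in (0:ℝ)..τ, Real.exp (-s ^ 2) := by
  rcases eq_or_lt_of_le h0 with h | h
  · simp [← h]
  · have key := inner_lb τ h0
    have h2 : (Real.exp (τ ^ 2) - 1) / 2 ≤ τ * (Real.exp (τ ^ 2) * ∫ s in (0:ℝ)..τ, Real.exp (-s ^ 2)) := by
      have := mul_le_mul_of_nonneg_left key (Real.exp_nonneg (τ ^ 2))
      have hE : Real.exp (τ ^ 2) * Real.exp (-τ ^ 2) = 1 := by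
        rw [← Real.exp_add]; simp
      calc (Real.exp (τ ^ 2) - 1) / 2
          = Real.exp (τ ^ 2) * ((1 - Real.exp (-τ ^ 2)) / 2) := by linear_combination (1/2 : ℝ) * hE
        _ ≤ Real.exp (τ ^ 2) * (τ * ∫ s in (0:ℝ)..τ, Real.exp (-s ^ 2)) := this
        _ = τ * (Real.exp (τ ^ 2) * ∫ s in (0:ℝ)..τ, Real.exp (-s ^ 2)) := by ring
    have hexp : 0 ≤ Real.exp (τ ^ 2) - 1 := by
      have := Real.one_le_exp (by positivity : (0:ℝ) ≤ τ ^ 2); linarith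
    rw [div_le_iff₀ (by positivity), ← mul_le_mul_iff_right₀ h]
    calc τ * (τ * (Real.exp (τ ^ 2) - 1))
        = τ ^ 2 * (Real.exp (τ ^ 2) - 1) := by ring
      _ ≤ z ^ 2 * (Real.exp (τ ^ 2) - 1) := by
          apply mul_le_mul_of_nonneg_right _ hexp
          exact pow_le_pow_left₀ h0 h1 2
      _ = (2 * z ^ 2) * ((Real.exp (τ ^ 2) - 1) / 2) := by ring
      _ ≤ (2 * z ^ 2) * (τ * (Real.exp (τ ^ 2) * ∫ s in (0:ℝ)..τ, Real.exp (-s ^ 2))) := by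
          apply mul_le_mul_of_nonneg_left h2 (by positivity)
      _ = τ * (Real.exp (τ ^ 2) * (∫ s in (0:ℝ)..τ, Real.exp (-s ^ 2)) * (2 * z ^ 2)) := by ring

lemma psi_lb (z : ℝ) (hz : 0 < z) :
    (Real.exp (z ^ 2) - 1) / (4 * z ^ 2) - 1 / 4
      ≤ ∫ τ in (0:ℝ)..z, Real.exp (τ ^ 2) * ∫ s in (0:ℝ)..τ, Real.exp (-s ^ 2) := by
  have h1 : ∫ τ in (0:ℝ)..z, τ * (Real.exp (τ ^ 2) - 1) / (2 * z ^ 2)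
      ≤ ∫ τ in (0:ℝ)..z, Real.exp (τ ^ 2) * ∫ s in (0:ℝ)..τ, Real.exp (-s ^ 2) := by
    apply intervalIntegral.integral_mono_on hz.le
    · apply Continuous.intervalIntegrable; continuity
    · exact inner_cont.intervalIntegrable 0 z
    · intro x hx; exact pointwise_psi z x hz hx.1 hx.2
  refine le_trans (le_of_eq ?_) h1
  have : ∀ τ : ℝ, τ * (Real.exp (τ ^ 2) - 1) / (2 * z ^ 2)
      = (1 / (2 * z ^ 2)) * (τ * Real.exp (τ ^ 2)) - (1 / (2 * z ^ 2)) * τ := by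
    intro τ; field_simp
  simp_rw [this]
  rw [intervalIntegral.integral_sub, intervalIntegral.integral_const_mul,
    intervalIntegral.integral_const_mul, int_texp, integral_id]
  · field_simp; ring
  · apply Continuous.intervalIntegrable; continuity
  · apply Continuous.intervalIntegrable; continuity

theorem ou_mean_first_passage_time_lower_bound (μ η : ℝ) (hμ : 0 < μ) (hη : 0 < η) :
    2 / μ * (Real.sqrt Real.pi * (Real.exp (η ^ 2 * μ / 2) - 1) / (Real.sqrt 2 * η * Real.sqrt μ)
        + (Real.exp (η ^ 2 * μ / 2) - 1) / (2 * η ^ 2 * μ) - 1 / 2)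
      ≤ 2 / μ * (Real.sqrt Real.pi * (∫ τ in (0:ℝ)..(η * Real.sqrt (μ / 2)), Real.exp (τ ^ 2))
        + ∫ τ in (0:ℝ)..(η * Real.sqrt (μ / 2)),
            Real.exp (τ ^ 2) * ∫ s in (0:ℝ)..τ, Real.exp (-s ^ 2)) := by
  set z := η * Real.sqrt (μ / 2) with hzdef
  have hz : 0 < z := by positivity
  have hz2 : z ^ 2 = η ^ 2 * μ / 2 := by
    rw [hzdef, mul_pow, Real.sq_sqrt (by positivity : (0:ℝ) ≤ μ / 2)]; ring
  have h2z : Real.sqrt 2 * η * Real.sqrt μ = 2 * z := by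
    have e1 : Real.sqrt 2 * Real.sqrt μ = Real.sqrt (2 * μ) := (Real.sqrt_mul (by norm_num) μ).symm
    have e2 : (2:ℝ) * Real.sqrt (μ / 2) = Real.sqrt (2 * μ) := by
      rw [show (2:ℝ) * μ = 4 * (μ / 2) by ring, Real.sqrt_mul (by norm_num : (0:ℝ) ≤ 4),
        show Real.sqrt 4 = 2 by rw [show (4:ℝ) = 2 ^ 2 by norm_num, Real.sqrt_sq (by norm_num : (0:ℝ) ≤ 2)]]
    rw [hzdef]
    rw [mul_comm (Real.sqrt 2) η, mul_assoc, e1, ← e2]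
    ring
  have h4z : 2 * η ^ 2 * μ = 4 * z ^ 2 := by rw [hz2]; ring
  have hez : η ^ 2 * μ / 2 = z ^ 2 := hz2.symm
  rw [hez, h2z, h4z]
  apply mul_le_mul_of_nonneg_left _ (by positivity : (0:ℝ) ≤ 2 / μ)
  have hphi := mul_le_mul_of_nonneg_left (phi_lb z hz) (Real.sqrt_nonneg Real.pi)
  have hpsi := psi_lb z hz
  rw [mul_div_assoc]
  linarith
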